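/- Let k ≥ 1, set n = 3k and ω = exp(2πi/n), let N ≥ 2, and let η_1, …, η_{2N} be elements of an associative unital ℂ-algebra, indexed cyclically mod 2N, satisfying η_j η_{j+1} = ω η_{j+1} η_j for all j, η_j η_k = η_k η_j whenever k ≢ j±1 (mod 2N), and η_j^n = 1 for all j. Set A₀ = Σ_{j=1}^{N} (η_{2j−1}^k − η_{2j−1}^{n−k}), z = 1 − ω^{−k²} and z̄ = 1 − ω^{k²}. Then for every j, the triple commutator satisfies [A₀,[A₀,[A₀, η_{2j}^k]]] = −9 z z̄ · [A₀, η_{2j}^k], and likewise [A₀,[A₀,[A₀, η_{2j}^{n−k}]]] = −9 z z̄ · [A₀, η_{2j}^{n−k}]. -/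

import Mathlib

private def Mon {A : Type*} [Ring A] (a c : A) (i l : ℕ) : A := a ^ i * c ^ l

private lemma qpow {A : Type*} [Ring A] [Algebra ℂ A] (qc : ℂ) (u v : A)
    (h : u * v = qc • (v * u)) :
    ∀ s t : ℕ, u ^ s * v ^ t = (qc ^ (s * t)) • (v ^ t * u ^ s) := by
  have key : ∀ t : ℕ, u * v ^ t = (qc ^ t) • (v ^ t * u) := by
    intro t
    induction t with
    | zero => simp
    | succ t ih =>
      calc u * v ^ (t + 1) = (u * v) * v ^ t := by rw [pow_succ', mul_assoc]
        _ = qc • (v * (u * v ^ t)) := by rw [h, smul_mul_assoc, mul_assoc]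
        _ = qc • (v * ((qc ^ t) • (v ^ t * u))) := by rw [ih]
        _ = (qc ^ (t + 1)) • (v ^ (t + 1) * u) := by
            rw [mul_smul_comm, smul_smul, ← mul_assoc, pow_succ' qc t, pow_succ' v t]
  intro s
  induction s with
  | zero => intro t; simp
  | succ s ih =>
    intro t
    calc u ^ (s + 1) * v ^ t = u ^ s * (u * v ^ t) := by rw [pow_succ, mul_assoc]
      _ = u ^ s * ((qc ^ t) • (v ^ t * u)) := by rw [key]
      _ = (qc ^ t) • ((u ^ s * v ^ t) * u) := by rw [mul_smul_comm, mul_assoc]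
      _ = (qc ^ t) • (((qc ^ (s * t)) • (v ^ t * u ^ s)) * u) := by rw [ih]
      _ = (qc ^ ((s + 1) * t)) • (v ^ t * u ^ (s + 1)) := by
            rw [smul_mul_assoc, smul_smul, mul_assoc, ← pow_succ, ← pow_add]
            ring_nf

private lemma core {A : Type*} [Ring A] [Algebra ℂ A] (q : ℂ) (hq : q ^ 3 = 1)
    (a x c : A) (ha : a ^ 3 = 1) (hc : c ^ 3 = 1)
    (hax : a * x = q • (x * a)) (hxc : x * c = q • (c * x)) (hac : a * c = c * a) :
    ⁅(a - a ^ 2) + (c - c ^ 2), ⁅(a - a ^ 2) + (c - c ^ 2), ⁅(a - a ^ 2) + (c - c ^ 2), x⁆⁆⁆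
      = (-9 * (1 - q ^ 2) * (1 - q)) • ⁅(a - a ^ 2) + (c - c ^ 2), x⁆ := by
  have hCac : Commute a c := hac
  set B : A := (a - a ^ 2) + (c - c ^ 2) with hB
  set T : A := ((q - 1) • Mon a c 1 0 + (1 - q ^ 2) • Mon a c 2 0)
      + ((q ^ 2 - 1) • Mon a c 0 1 + (1 - q) • Mon a c 0 2) with hT
  -- evaluation of monomials
  have ev1 : Mon a c 1 0 = a := by simp [Mon]
  have ev2 : Mon a c 2 0 = a ^ 2 := by simp [Mon]
  have ev3 : Mon a c 0 1 = c := by simp [Mon]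
  have ev4 : Mon a c 0 2 = c ^ 2 := by simp [Mon]
  -- monomial multiplication and reduction
  have hMmul : ∀ i l i' l' : ℕ, Mon a c i l * Mon a c i' l' = Mon a c (i + i') (l + l') := by
    intro i l i' l'
    show a ^ i * c ^ l * (a ^ i' * c ^ l') = a ^ (i + i') * c ^ (l + l')
    rw [mul_assoc (a ^ i), ← mul_assoc (c ^ l), (hCac.symm.pow_pow l i').eq]
    simp only [pow_add, mul_assoc]
  have hMa3 : ∀ l, Mon a c 3 l = Mon a c 0 l := by
    intro l; show a ^ 3 * c ^ l = a ^ 0 * c ^ l; rw [ha, pow_zero]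
  have hMa4 : ∀ l, Mon a c 4 l = Mon a c 1 l := by
    intro l; show a ^ 4 * c ^ l = a ^ 1 * c ^ l
    rw [show (4 : ℕ) = 1 + 3 from rfl, pow_add, ha, mul_one]
  have hMc3 : ∀ i, Mon a c i 3 = Mon a c i 0 := by
    intro i; show a ^ i * c ^ 3 = a ^ i * c ^ 0; rw [hc, pow_zero]
  have hMc4 : ∀ i, Mon a c i 4 = Mon a c i 1 := by
    intro i; show a ^ i * c ^ 4 = a ^ i * c ^ 1
    rw [show (4 : ℕ) = 1 + 3 from rfl, pow_add, hc, mul_one]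
  -- commutation of x with the generators
  have ha2x : a ^ 2 * x = (q ^ 2) • (x * a ^ 2) := by
    have h := qpow q a x hax 2 1
    simpa using h
  have hcx : c * x = (q ^ 2) • (x * c) := by
    rw [hxc, smul_smul, show q ^ 2 * q = (1 : ℂ) from by linear_combination hq, one_smul]
  have hc2x : c ^ 2 * x = q • (x * c ^ 2) := by
    have h := qpow (q ^ 2) c x hcx 2 1
    simp only [pow_one, mul_one] at h
    rw [h, show ((q ^ 2) ^ 2 : ℂ) = q from by linear_combination q * hq]
  -- first commutator
  have h1 : ⁅B, x⁆ = x * T := by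
    rw [Ring.lie_def, hB, hT]
    simp only [ev1, ev2, ev3, ev4, add_mul, sub_mul, mul_add, mul_sub, hax, ha2x, hcx, hc2x,
      mul_smul_comm]
    module
  -- commutation facts
  have hCaB : Commute a B := by
    rw [hB]
    exact ((Commute.refl a).sub_right ((Commute.refl a).pow_right 2)).add_right
      (hCac.sub_right (hCac.pow_right 2))
  have hCcB : Commute c B := by
    rw [hB]
    exact (hCac.symm.sub_right (hCac.symm.pow_right 2)).add_right
      ((Commute.refl c).sub_right ((Commute.refl c).pow_right 2))
  have hCMB : ∀ i l : ℕ, Commute (Mon a c i l) B := fun i l =>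
    (hCaB.pow_left i).mul_left (hCcB.pow_left l)
  have hCTB : Commute T B := by
    rw [hT]
    exact (((hCMB 1 0).smul_left _).add_left ((hCMB 2 0).smul_left _)).add_left
      (((hCMB 0 1).smul_left _).add_left ((hCMB 0 2).smul_left _))
  have hstep : ∀ w : A, Commute w B → ⁅B, x * w⁆ = ⁅B, x⁆ * w := by
    intro w hw
    have hxwB : x * w * B = x * B * w := by rw [mul_assoc, hw.eq, ← mul_assoc]
    rw [Ring.lie_def, Ring.lie_def, hxwB]
    noncomm_ring
  -- cube of T
  have hT3 : T * (T * T) = (-9 * (1 - q ^ 2) * (1 - q)) • T := by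
    rw [hT]
    simp only [smul_mul_assoc, mul_smul_comm, smul_smul, add_mul, mul_add, hMmul,
      Nat.reduceAdd, hMa3, hMa4, hMc3, hMc4, smul_add]
    match_scalars <;>
      first
      | linear_combination (3 * q ^ 3 - 9 * q + 6) * hq
      | linear_combination (-(3 * q ^ 3) + 9 * q - 6) * hq
      | ring
  -- assemble
  rw [h1, hstep T hCTB, h1, mul_assoc, hstep (T * T) (hCTB.mul_left hCTB), h1, mul_assoc,
    hT3, mul_smul_comm]


/-- key identity in the proof of Theorem 2 of the paper.
Let `k ≥ 1`, `n = 3k`, `ω = exp(2πi/n)`, and let `η_j` (indexed cyclically mod `2N`,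
`N ≥ 2`) satisfy `η_j η_{j+1} = ω η_{j+1} η_j`, `η_j η_k = η_k η_j` for
`k ≢ j ± 1 (mod 2N)`, and `η_j^n = 1`.  With
`A₀ = Σ (η_{2j−1}^k − η_{2j−1}^{n−k})`, `z = 1 − ω^{−k²}` and `z̄ = 1 − ω^{k²}`,
one has `[A₀,[A₀,[A₀, η_{2j}^k]]] = −9 z z̄ [A₀, η_{2j}^k]` and
`[A₀,[A₀,[A₀, η_{2j}^{n−k}]]] = −9 z z̄ [A₀, η_{2j}^{n−k}]` for every `j`. -/
theorem triple_commutator_clock_third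
    (k n : ℕ) (hk1 : 1 ≤ k) (hn : n = 3 * k)
    (N : ℕ) (hN : 2 ≤ N) (A : Type*) [Ring A] [Algebra ℂ A]
    (ω : ℂ) (hω : ω = Complex.exp (2 * Real.pi * Complex.I / n))
    (η : ZMod (2 * N) → A)
    (hanti : ∀ j : ZMod (2 * N), η j * η (j + 1) = ω • (η (j + 1) * η j))
    (hcomm : ∀ j l : ZMod (2 * N), l ≠ j + 1 → l ≠ j - 1 → η j * η l = η l * η j)
    (hpow : ∀ j : ZMod (2 * N), η j ^ n = 1)
    (A₀ : A)
    (hA₀ : A₀ = ∑ j ∈ Finset.range N,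
      (η (2 * (j : ZMod (2 * N)) + 1) ^ k - η (2 * (j : ZMod (2 * N)) + 1) ^ (n - k)))
    (z zbar : ℂ) (hz : z = 1 - (ω ^ (k ^ 2))⁻¹) (hzbar : zbar = 1 - ω ^ (k ^ 2)) :
    ∀ j : ZMod (2 * N),
      ⁅A₀, ⁅A₀, ⁅A₀, η (2 * j) ^ k⁆⁆⁆ = (-9 * z * zbar) • ⁅A₀, η (2 * j) ^ k⁆ ∧
      ⁅A₀, ⁅A₀, ⁅A₀, η (2 * j) ^ (n - k)⁆⁆⁆
        = (-9 * z * zbar) • ⁅A₀, η (2 * j) ^ (n - k)⁆ := by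
  intro j
  haveI : NeZero (2 * N) := ⟨by omega⟩
  haveI : Fact (1 < 2 * N) := ⟨by omega⟩
  -- scalar facts
  have hωn : ω ^ n = 1 := by
    have hn0 : (n : ℂ) ≠ 0 := Nat.cast_ne_zero.mpr (by omega)
    rw [hω, ← Complex.exp_nat_mul,
      show (n : ℂ) * (2 * Real.pi * Complex.I / n) = 2 * Real.pi * Complex.I by
        field_simp]
    exact Complex.exp_two_pi_mul_I
  set q : ℂ := ω ^ (k ^ 2) with hqdef
  have hq3 : q ^ 3 = 1 := by
    rw [hqdef, ← pow_mul, show k ^ 2 * 3 = n * k by rw [hn]; ring, pow_mul, hωn, one_pow]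
  have hq0 : q * q ^ 2 = 1 := by linear_combination hq3
  have hzq : z = 1 - q ^ 2 := by rw [hz, inv_eq_of_mul_eq_one_right hq0]
  -- index bookkeeping
  set v : ℕ := j.val with hvdef
  have hvlt : v < 2 * N := ZMod.val_lt j
  have hv : ((v : ℕ) : ZMod (2 * N)) = j := ZMod.natCast_rightInverse j
  set j₁ : ℕ := if v = 0 then N - 1 else if v ≤ N then v - 1 else v - N - 1 with hj₁def
  set j₂ : ℕ := if v < N then v else v - N with hj₂def
  have hj₁lt : j₁ < N := by rw [hj₁def]; split_ifs <;> omega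
  have hj₂lt : j₂ < N := by rw [hj₂def]; split_ifs <;> omega
  have hj1lin : 2 * j₁ + 2 = 2 * v + 2 * N ∨ 2 * j₁ + 2 = 2 * v ∨ 2 * j₁ + 2 + 2 * N = 2 * v := by
    rw [hj₁def]; split_ifs <;> omega
  have hj2lin : 2 * j₂ = 2 * v ∨ 2 * j₂ + 2 * N = 2 * v := by
    rw [hj₂def]; split_ifs <;> omega
  have casteq : ∀ s t : ℕ, (s = t ∨ s + 2 * N = t ∨ t + 2 * N = s ∨ s + 4 * N = t ∨ t + 4 * N = s) →
      ((s : ZMod (2 * N)) = (t : ZMod (2 * N))) := by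
    have h1 : ∀ s : ℕ, ((s + 2 * N : ℕ) : ZMod (2 * N)) = (s : ZMod (2 * N)) := by
      intro s; rw [Nat.cast_add, ZMod.natCast_self, add_zero]
    intro s t h
    rcases h with h | h | h | h | h
    · rw [h]
    · rw [← h, h1]
    · rw [← h, h1]
    · rw [← h, show s + 4 * N = s + 2 * N + 2 * N by ring, h1, h1]
    · rw [← h, show t + 4 * N = t + 2 * N + 2 * N by ring, h1, h1]
  have castdvd : ∀ s t : ℕ, ((s : ZMod (2 * N)) = (t : ZMod (2 * N))) →
      ∃ d : ℤ, (t : ℤ) - s = 2 * N * d := by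
    intro s t h
    rw [ZMod.natCast_eq_natCast_iff] at h
    obtain ⟨d, hd⟩ := h.dvd
    refine ⟨d, ?_⟩
    push_cast at hd ⊢
    linarith
  have hNZ : (0 : ℤ) < 2 * N := by
    have : (1 : ℤ) ≤ (N : ℤ) := by exact_mod_cast (by omega : 1 ≤ N)
    linarith
  have hmodN : ∀ s t : ℕ, s ≤ 6 * N → t ≤ 6 * N → ((s : ZMod (2 * N)) = (t : ZMod (2 * N))) →
      (s = t ∨ s + 2 * N = t ∨ t + 2 * N = s ∨ s + 4 * N = t ∨ t + 4 * N = s ∨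
        s + 6 * N = t ∨ t + 6 * N = s) := by
    intro s t hs ht h
    obtain ⟨d, hd⟩ := castdvd s t h
    have hd1 : -3 ≤ d := by
      have h1 : 2 * (N : ℤ) * (-3) ≤ 2 * N * d := by
        rw [← hd]
        have : (s : ℤ) ≤ 6 * N := by exact_mod_cast hs
        have : (0 : ℤ) ≤ (t : ℤ) := Int.natCast_nonneg t
        linarith
      exact le_of_mul_le_mul_left h1 hNZ
    have hd2 : d ≤ 3 := by
      have h1 : 2 * (N : ℤ) * d ≤ 2 * N * 3 := by
        rw [← hd]
        have : (t : ℤ) ≤ 6 * N := by exact_mod_cast ht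
        have : (0 : ℤ) ≤ (s : ℤ) := Int.natCast_nonneg s
        linarith
      exact le_of_mul_le_mul_left h1 hNZ
    interval_cases d <;> omega
  have hodd_even : ∀ s t : ℕ, ((2 * s + 1 : ℕ) : ZMod (2 * N)) ≠ ((2 * t : ℕ) : ZMod (2 * N)) := by
    intro s t h
    obtain ⟨d, hd⟩ := castdvd _ _ h
    obtain ⟨w, hw⟩ : ∃ w : ℤ, 2 * (t : ℤ) - (2 * s + 1) = 2 * w :=
      ⟨(N : ℤ) * d, by push_cast at hd ⊢; linarith⟩
    omega
  -- cast normal forms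
  have hw0 : 2 * j = ((2 * v : ℕ) : ZMod (2 * N)) := by rw [← hv]; push_cast; ring
  have hwp : 2 * j + 1 = ((2 * v + 1 : ℕ) : ZMod (2 * N)) := by rw [← hv]; push_cast; ring
  have hwm : 2 * j - 1 = ((2 * v + 2 * N - 1 : ℕ) : ZMod (2 * N)) := by
    have hA : ((2 * v + 2 * N - 1 : ℕ) : ZMod (2 * N)) + 1 = 2 * j := by
      have h2 : ((2 * v + 2 * N - 1 : ℕ) : ZMod (2 * N)) + 1
          = ((2 * v + 2 * N - 1 + 1 : ℕ) : ZMod (2 * N)) := by push_cast; ring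
      rw [h2, show 2 * v + 2 * N - 1 + 1 = 2 * v + 2 * N by omega,
        casteq (2 * v + 2 * N) (2 * v) (by omega), hw0]
    rw [← hA]; ring
  have him : ∀ m : ℕ, 2 * ((m : ℕ) : ZMod (2 * N)) + 1 = ((2 * m + 1 : ℕ) : ZMod (2 * N)) := by
    intro m; push_cast; ring
  have him1 : ∀ m : ℕ, 2 * ((m : ℕ) : ZMod (2 * N)) + 1 + 1 = ((2 * m + 2 : ℕ) : ZMod (2 * N)) := by
    intro m; push_cast; ring
  have him2 : ∀ m : ℕ, 2 * ((m : ℕ) : ZMod (2 * N)) + 1 - 1 = ((2 * m : ℕ) : ZMod (2 * N)) := by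
    intro m; push_cast; ring
  have hI1 : 2 * ((j₁ : ℕ) : ZMod (2 * N)) + 1 = 2 * j - 1 := by
    rw [him j₁, hwm]; exact casteq _ _ (by omega)
  have hI2 : 2 * ((j₂ : ℕ) : ZMod (2 * N)) + 1 = 2 * j + 1 := by
    rw [him j₂, hwp]; exact casteq _ _ (by omega)
  have hj₂ne : j₂ ≠ j₁ := by omega
  -- sum splitting
  have hj₁mem : j₁ ∈ Finset.range N := Finset.mem_range.mpr hj₁lt
  have hj₂mem : j₂ ∈ (Finset.range N).erase j₁ :=
    Finset.mem_erase.mpr ⟨hj₂ne, Finset.mem_range.mpr hj₂lt⟩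
  set s' : Finset ℕ := ((Finset.range N).erase j₁).erase j₂ with hs'def
  set R : A := ∑ m ∈ s',
      (η (2 * (m : ZMod (2 * N)) + 1) ^ k - η (2 * (m : ZMod (2 * N)) + 1) ^ (n - k)) with hRdef
  have hnk : n - k = k * 2 := by omega
  have hexp : ∀ t : ZMod (2 * N), η t ^ (n - k) = (η t ^ k) ^ 2 := by
    intro t; rw [hnk, pow_mul]
  set a : A := η (2 * j - 1) ^ k with hadef
  set c : A := η (2 * j + 1) ^ k with hcdef
  set x : A := η (2 * j) ^ k with hxdef
  have hA₀B : A₀ = ((a - a ^ 2) + (c - c ^ 2)) + R := by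
    rw [hA₀, ← Finset.add_sum_erase _ _ hj₁mem, ← Finset.add_sum_erase _ _ hj₂mem,
      hI1, hI2, hexp (2 * j - 1), hexp (2 * j + 1), ← hadef, ← hcdef, ← hs'def, ← hRdef]
    abel
  -- commutation of R with everything relevant
  have hmem' : ∀ m ∈ s', m < N ∧ m ≠ j₁ ∧ m ≠ j₂ := by
    intro m hm
    obtain ⟨h1, hm'⟩ := Finset.mem_erase.mp hm
    obtain ⟨h2, hm''⟩ := Finset.mem_erase.mp hm'
    exact ⟨Finset.mem_range.mp hm'', h2, h1⟩
  have hcm0 : ∀ m ∈ s', Commute (η (2 * (m : ZMod (2 * N)) + 1)) (η (2 * j)) := by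
    intro m hm
    obtain ⟨hmlt, hmj₁, hmj₂⟩ := hmem' m hm
    refine hcomm _ _ ?_ ?_
    · rw [hw0, him1 m]
      intro h
      have hd := hmodN (2 * v) (2 * m + 2) (by omega) (by omega) h
      omega
    · rw [hw0, him2 m]
      intro h
      have hd := hmodN (2 * v) (2 * m) (by omega) (by omega) h
      omega
  have hcm1 : ∀ m ∈ s', Commute (η (2 * (m : ZMod (2 * N)) + 1)) (η (2 * j - 1)) := by
    intro m hm
    refine hcomm _ _ ?_ ?_
    · rw [hwm, him1 m, show 2 * v + 2 * N - 1 = 2 * (v + N - 1) + 1 by omega,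
        show 2 * m + 2 = 2 * (m + 1) by ring]
      exact hodd_even (v + N - 1) (m + 1)
    · rw [hwm, him2 m, show 2 * v + 2 * N - 1 = 2 * (v + N - 1) + 1 by omega]
      exact hodd_even (v + N - 1) m
  have hcm2 : ∀ m ∈ s', Commute (η (2 * (m : ZMod (2 * N)) + 1)) (η (2 * j + 1)) := by
    intro m hm
    refine hcomm _ _ ?_ ?_
    · rw [hwp, him1 m, show 2 * m + 2 = 2 * (m + 1) by ring]
      exact hodd_even v (m + 1)
    · rw [hwp, him2 m]
      exact hodd_even v m
  have hRt : ∀ tv : ZMod (2 * N),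
      (∀ m ∈ s', Commute (η (2 * (m : ZMod (2 * N)) + 1)) (η tv)) → Commute R (η tv) := by
    intro tv h
    exact Commute.sum_left _ _ _ (fun m hm => ((h m hm).pow_left k).sub_left
      ((h m hm).pow_left (n - k)))
  have hRx0 := hRt _ hcm0
  have hRa0 := hRt _ hcm1
  have hRc0 := hRt _ hcm2
  have hRa : Commute R a := hRa0.pow_right k
  have hRc : Commute R c := hRc0.pow_right k
  have hRx : Commute R x := hRx0.pow_right k
  have hRx' : Commute R (η (2 * j) ^ (n - k)) := hRx0.pow_right (n - k)
  have hRB : Commute R ((a - a ^ 2) + (c - c ^ 2)) :=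
    (hRa.sub_right (hRa.pow_right 2)).add_right (hRc.sub_right (hRc.pow_right 2))
  have lie_red : ∀ y : A, Commute R y → ⁅A₀, y⁆ = ⁅(a - a ^ 2) + (c - c ^ 2), y⁆ := by
    intro y hy
    rw [hA₀B, Ring.lie_def, Ring.lie_def, add_mul, mul_add, hy.eq]
    abel
  -- the basic clock relations
  have haxη : η (2 * j - 1) * η (2 * j) = ω • (η (2 * j) * η (2 * j - 1)) := by
    have h := hanti (2 * j - 1)
    rwa [sub_add_cancel] at h
  have hxcη := hanti (2 * j)
  have hacη : η (2 * j - 1) * η (2 * j + 1) = η (2 * j + 1) * η (2 * j - 1) := by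
    refine hcomm _ _ ?_ ?_
    · rw [sub_add_cancel]
      intro h
      have h1 : (1 : ZMod (2 * N)) = 0 := by linear_combination h
      exact one_ne_zero h1
    · intro h
      have h3 : ((3 : ℕ) : ZMod (2 * N)) = ((0 : ℕ) : ZMod (2 * N)) := by
        push_cast
        linear_combination h
      obtain ⟨d, hd⟩ := castdvd _ _ h3
      obtain ⟨w, hw⟩ : ∃ w : ℤ, (0 : ℤ) - 3 = 2 * w := ⟨(N : ℤ) * d, by push_cast at hd ⊢; linarith⟩
      omega
  have hax : a * x = q • (x * a) := by
    rw [hadef, hxdef, qpow ω _ _ haxη k k, hqdef, show k * k = k ^ 2 by ring]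
  have hxc : x * c = q • (c * x) := by
    rw [hcdef, hxdef, qpow ω _ _ hxcη k k, hqdef, show k * k = k ^ 2 by ring]
  have hac : a * c = c * a := ((show Commute (η (2 * j - 1)) (η (2 * j + 1)) from hacη).pow_pow k k).eq
  have ha3 : a ^ 3 = 1 := by rw [hadef, ← pow_mul, show k * 3 = n by omega, hpow]
  have hc3 : c ^ 3 = 1 := by rw [hcdef, ← pow_mul, show k * 3 = n by omega, hpow]
  have hknk : k * (n - k) = k ^ 2 * 2 := by
    rw [hn, show 3 * k - k = 2 * k by omega]; ring
  have hax' : a * η (2 * j) ^ (n - k) = (q ^ 2) • (η (2 * j) ^ (n - k) * a) := by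
    rw [hadef, qpow ω _ _ haxη k (n - k), hqdef, ← pow_mul, hknk]
  have hx'c : η (2 * j) ^ (n - k) * c = (q ^ 2) • (c * η (2 * j) ^ (n - k)) := by
    rw [hcdef, qpow ω _ _ hxcη (n - k) k, hqdef, ← pow_mul,
      show (n - k) * k = k ^ 2 * 2 by rw [← hknk]; ring]
  have hq'3 : (q ^ 2) ^ 3 = 1 := by
    rw [← pow_mul, show 2 * 3 = 3 * 2 by rfl, pow_mul, hq3, one_pow]
  constructor
  · -- first identity
    have hcore := core q hq3 a x c ha3 hc3 hax hxc hac
    have e1 : ⁅A₀, x⁆ = ⁅(a - a ^ 2) + (c - c ^ 2), x⁆ := lie_red _ hRx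
    have hRl1 : Commute R ⁅(a - a ^ 2) + (c - c ^ 2), x⁆ := by
      rw [Ring.lie_def]
      exact (hRB.mul_right hRx).sub_right (hRx.mul_right hRB)
    have e2 : ⁅A₀, ⁅A₀, x⁆⁆ = ⁅(a - a ^ 2) + (c - c ^ 2), ⁅(a - a ^ 2) + (c - c ^ 2), x⁆⁆ := by
      rw [e1, lie_red _ hRl1]
    have hRl2 : Commute R ⁅(a - a ^ 2) + (c - c ^ 2), ⁅(a - a ^ 2) + (c - c ^ 2), x⁆⁆ := by
      rw [Ring.lie_def ((a - a ^ 2) + (c - c ^ 2))]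
      exact (hRB.mul_right hRl1).sub_right (hRl1.mul_right hRB)
    have e3 : ⁅A₀, ⁅A₀, ⁅A₀, x⁆⁆⁆
        = ⁅(a - a ^ 2) + (c - c ^ 2), ⁅(a - a ^ 2) + (c - c ^ 2), ⁅(a - a ^ 2) + (c - c ^ 2), x⁆⁆⁆ := by
      rw [e2, lie_red _ hRl2]
    rw [e3, e1, hcore, hzq, hzbar]
  · -- second identity
    set x' : A := η (2 * j) ^ (n - k) with hx'def
    have hcore := core (q ^ 2) hq'3 a x' c ha3 hc3 hax' hx'c hac
    have hsc : (-9 * (1 - (q ^ 2) ^ 2) * (1 - q ^ 2) : ℂ) = -9 * z * zbar := by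
      rw [hzq, hzbar]
      linear_combination (9 * q * (1 - q ^ 2)) * hq3
    have e1 : ⁅A₀, x'⁆ = ⁅(a - a ^ 2) + (c - c ^ 2), x'⁆ := lie_red _ hRx'
    have hRl1 : Commute R ⁅(a - a ^ 2) + (c - c ^ 2), x'⁆ := by
      rw [Ring.lie_def]
      exact (hRB.mul_right hRx').sub_right (hRx'.mul_right hRB)
    have e2 : ⁅A₀, ⁅A₀, x'⁆⁆ = ⁅(a - a ^ 2) + (c - c ^ 2), ⁅(a - a ^ 2) + (c - c ^ 2), x'⁆⁆ := by
      rw [e1, lie_red _ hRl1]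
    have hRl2 : Commute R ⁅(a - a ^ 2) + (c - c ^ 2), ⁅(a - a ^ 2) + (c - c ^ 2), x'⁆⁆ := by
      rw [Ring.lie_def ((a - a ^ 2) + (c - c ^ 2))]
      exact (hRB.mul_right hRl1).sub_right (hRl1.mul_right hRB)
    have e3 : ⁅A₀, ⁅A₀, ⁅A₀, x'⁆⁆⁆
        = ⁅(a - a ^ 2) + (c - c ^ 2), ⁅(a - a ^ 2) + (c - c ^ 2), ⁅(a - a ^ 2) + (c - c ^ 2), x'⁆⁆⁆ := by
      rw [e2, lie_red _ hRl2]
    rw [e3, e1, hcore, hsc]
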